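/- Let u : ℝⁿ → ℝ be convex. For each standard basis vector eᵢ, the set of points x at which the partial derivative ∂u/∂xᵢ fails to exist is a G_{δσ} set (a countable union of countable intersections of open sets). -/
import Mathlib


open Filter Metric Set
open scoped Topology

private lemma slope_mono' {g : ℝ → ℝ} (hg : ConvexOn ℝ Set.univ g) {s t : ℝ}
    (hs : s ≠ 0) (ht : t ≠ 0) (hst : s ≤ t) :
    (g s - g 0) / s ≤ (g t - g 0) / t := by
  simpa using hg.secant_mono (Set.mem_univ 0) (Set.mem_univ s) (Set.mem_univ t) hs ht hst

private lemma key {g : ℝ → ℝ} (hg : ConvexOn ℝ Set.univ g) :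
    ¬ DifferentiableAt ℝ g 0 ↔
      ∃ c : ℝ, 0 < c ∧ ∀ t : ℝ, 0 < t →
        (g (-t) - g 0) / (-t) + c ≤ (g t - g 0) / t := by
  have hslope : ∀ t : ℝ, slope g 0 t = (g t - g 0) / t := by
    intro t; simp [slope_def_field]
  constructor
  · intro hnd
    by_contra hc
    push_neg at hc
    apply hnd
    set S : ℝ → ℝ := fun t => (g t - g 0) / t with hS
    have hub : ∀ s < (0:ℝ), ∀ t, 0 < t → S s ≤ S t := fun s hs t ht =>
      slope_mono' hg hs.ne ht.ne' (by linarith)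
    have hbdd : BddAbove (S '' Set.Iio 0) := by
      refine ⟨S 1, ?_⟩; rintro y ⟨s, hs, rfl⟩; exact hub s hs 1 one_pos
    have hne : (S '' Set.Iio 0).Nonempty := ⟨S (-1), ⟨-1, by norm_num, rfl⟩⟩
    set d := sSup (S '' Set.Iio 0) with hd
    have hled : ∀ s < (0:ℝ), S s ≤ d := fun s hs => le_csSup hbdd ⟨s, hs, rfl⟩
    have hdle : ∀ t, 0 < t → d ≤ S t := fun t ht =>
      csSup_le hne (by rintro y ⟨s, hs, rfl⟩; exact hub s hs t ht)
    have hder : HasDerivAt g d 0 := by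
      rw [hasDerivAt_iff_tendsto_slope, Metric.tendsto_nhds]
      intro ε hε
      obtain ⟨t₀, ht₀, hQ⟩ := hc (ε/2) (by positivity)
      have hmem : Set.Ioo (-t₀) t₀ ∈ 𝓝[≠] (0:ℝ) :=
        nhdsWithin_le_nhds (Ioo_mem_nhds (by linarith) ht₀)
      filter_upwards [hmem, self_mem_nhdsWithin] with t htI htne
      have htne' : t ≠ 0 := htne
      rw [Real.dist_eq, hslope]
      rcases lt_or_gt_of_ne htne' with h | h
      · have h1 : S t ≤ d := hled t h
        have h2 : d ≤ S (-t) := hdle (-t) (by linarith)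
        have h3 : S (-t) ≤ S t₀ :=
          slope_mono' hg (by linarith : (-t : ℝ) ≠ 0) ht₀.ne' (by linarith [htI.1])
        have h4 : S (-t₀) ≤ S t :=
          slope_mono' hg (by linarith : (-t₀ : ℝ) ≠ 0) htne' (by linarith [htI.1])
        rw [abs_lt]
        constructor <;> [skip; linarith]
        have : S t₀ < S (-t₀) + ε/2 := by simpa [hS] using hQ
        linarith
      · have h1 : d ≤ S t := hdle t h
        have h2 : S (-t) ≤ d := hled (-t) (by linarith)
        have h3 : S t ≤ S t₀ := slope_mono' hg htne' ht₀.ne' (le_of_lt htI.2)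
        have h4 : S (-t₀) ≤ S (-t) :=
          slope_mono' hg (by linarith : (-t₀ : ℝ) ≠ 0) (by linarith : (-t : ℝ) ≠ 0)
            (by linarith [htI.2])
        rw [abs_lt]
        constructor <;> [linarith; skip]
        have : S t₀ < S (-t₀) + ε/2 := by simpa [hS] using hQ
        linarith
    exact hder.differentiableAt
  · rintro ⟨c, hc, h⟩ hdiff
    have hder := hdiff.hasDerivAt
    set d := deriv g 0
    have htend : Tendsto (slope g 0) (𝓝[≠] (0:ℝ)) (𝓝 d) :=
      hasDerivAt_iff_tendsto_slope.mp hder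
    have hR : Tendsto (fun t => (g t - g 0) / t) (𝓝[>] (0:ℝ)) (𝓝 d) := by
      have h0 := htend.mono_left (nhdsWithin_mono 0 (fun x (hx : x ∈ Set.Ioi 0) => ne_of_gt hx))
      rwa [show (slope g 0) = fun t => (g t - g 0) / t from funext hslope] at h0
    have hnegmap : Tendsto (fun t : ℝ => -t) (𝓝[>] (0:ℝ)) (𝓝[≠] (0:ℝ)) := by
      rw [tendsto_nhdsWithin_iff]
      constructor
      · simpa using ((continuous_neg : Continuous (fun t : ℝ => -t)).tendsto 0).mono_left
          nhdsWithin_le_nhds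
      · filter_upwards [self_mem_nhdsWithin] with t (ht : t ∈ Set.Ioi 0)
        exact (neg_lt_zero.mpr ht).ne
    have hL : Tendsto (fun t : ℝ => (g (-t) - g 0) / (-t) + c) (𝓝[>] (0:ℝ)) (𝓝 (d + c)) := by
      have h1 := (htend.comp hnegmap).add (tendsto_const_nhds (x := c) (f := 𝓝[>] (0:ℝ)))
      have h2 : (fun x : ℝ => (slope g 0 ∘ fun t => -t) x + c) =
          fun t : ℝ => (g (-t) - g 0) / (-t) + c := by
        funext t; simp [Function.comp, hslope]
      rwa [h2] at h1
    have hle : d + c ≤ d := by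
      refine le_of_tendsto_of_tendsto hL hR ?_
      filter_upwards [self_mem_nhdsWithin] with t (ht : t ∈ Set.Ioi 0)
      exact h t ht
    linarith

theorem stmt4 {n : ℕ} (u : EuclideanSpace ℝ (Fin n) → ℝ)
    (hconv : ConvexOn ℝ Set.univ u) (i : Fin n) :
    ∃ G : ℕ → ℕ → Set (EuclideanSpace ℝ (Fin n)),
      (∀ j k, IsOpen (G j k)) ∧
      {x | ¬ DifferentiableAt ℝ
          (fun t : ℝ => u (x + t • EuclideanSpace.single i (1 : ℝ))) 0} =
        ⋃ j, ⋂ k, G j k := by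
  set e : EuclideanSpace ℝ (Fin n) := EuclideanSpace.single i (1 : ℝ) with he
  set g : EuclideanSpace ℝ (Fin n) → ℝ → ℝ := fun x t => u (x + t • e) with hgdef
  have hgconv : ∀ x, ConvexOn ℝ Set.univ (g x) := by
    intro x
    refine ⟨convex_univ, ?_⟩
    intro t1 _ t2 _ a b ha hb hab
    have h := hconv.2 (Set.mem_univ (x + t1 • e)) (Set.mem_univ (x + t2 • e)) ha hb hab
    have heq : a • (x + t1 • e) + b • (x + t2 • e) = (a + b) • x + (a * t1 + b * t2) • e := by
      module
    rw [heq, hab, one_smul] at h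
    simpa [hgdef, smul_eq_mul] using h
  -- slope difference function
  set F : EuclideanSpace ℝ (Fin n) → ℝ → ℝ := fun x t =>
    (g x t - g x 0) / t - (g x (-t) - g x 0) / (-t) with hFdef
  have hFmono : ∀ x, ∀ s t : ℝ, 0 < s → s ≤ t → F x s ≤ F x t := by
    intro x s t hs hst
    have h1 := slope_mono' (hgconv x) hs.ne' (by linarith : t ≠ 0) hst
    have h2 := slope_mono' (hgconv x) (by linarith : -t ≠ 0) (by linarith : -s ≠ 0)
      (by linarith)
    simp only [hFdef]
    linarith
  have ucont : Continuous u := hconv.locallyLipschitz.continuous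
  refine ⟨fun j k => {x | (1:ℝ)/(j+1) - 1/(k+1) < F x (1/(k+1))}, ?_, ?_⟩
  · intro j k
    have hFc : Continuous (fun x => F x (1/(k+1) : ℝ)) := by
      apply Continuous.sub <;> apply Continuous.div_const <;> apply Continuous.sub <;>
        exact ucont.comp (by continuity)
    exact isOpen_lt continuous_const hFc
  · ext x
    simp only [Set.mem_setOf_eq, Set.mem_iUnion, Set.mem_iInter]
    rw [key (hgconv x)]
    constructor
    · rintro ⟨c, hc, h⟩
      obtain ⟨j, hj⟩ := exists_nat_one_div_lt hc
      refine ⟨j, fun k => ?_⟩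
      have hk : (0:ℝ) < 1/(k+1) := by positivity
      have := h (1/(k+1)) hk
      have hF : c ≤ F x (1/(k+1)) := by simp only [hFdef]; linarith
      have hkk : (0:ℝ) < 1/(k+1) := hk
      calc (1:ℝ)/(j+1) - 1/(k+1) < 1/(j+1) := by linarith
        _ < c := hj
        _ ≤ F x (1/(k+1)) := hF
    · rintro ⟨j, hj⟩
      refine ⟨1/(j+1), by positivity, ?_⟩
      intro t ht
      have hFt : (1:ℝ)/(j+1) ≤ F x t := by
        refine le_of_forall_pos_le_add ?_
        intro ε hε
        obtain ⟨k, hk⟩ := exists_nat_one_div_lt (lt_min ht hε)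
        have hk1 : (1:ℝ)/(k+1) < t := hk.trans_le (min_le_left _ _)
        have hk2 : (1:ℝ)/(k+1) < ε := hk.trans_le (min_le_right _ _)
        have hkpos : (0:ℝ) < 1/(k+1) := by positivity
        have := hFmono x (1/(k+1)) t hkpos hk1.le
        have := hj k
        linarith
      simp only [hFdef] at hFt
      linarith
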